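/- For n ≥ 1, λ ∈ ℂ with λ ≠ 0, and 0 ≤ l ≤ n, the rank of (J_{n,λ}⁻¹ − (1/λ)·I_n)^l equals n − l; in particular (J_{n,λ}⁻¹ − (1/λ)·I_n)^l ≠ 0 for 0 ≤ l ≤ n−1 and (J_{n,λ}⁻¹ − (1/λ)·I_n)^n = 0. -/

import Mathlib

open Matrix Finset

/-- The `n × n` nilpotent Jordan block over `ℂ`: `1`s on the superdiagonal, `0` elsewhere. -/
def Mblock (n : ℕ) : Matrix (Fin n) (Fin n) ℂ :=
  Matrix.of fun i j => if (j : ℕ) = (i : ℕ) + 1 then 1 else 0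

/-- The Jordan cell `J_{n,λ} = λ·I_n + M_n`. -/
def Jcell (n : ℕ) (lam : ℂ) : Matrix (Fin n) (Fin n) ℂ :=
  lam • (1 : Matrix (Fin n) (Fin n) ℂ) + Mblock n

lemma Mblock_pow (n l : ℕ) :
    (Mblock n) ^ l = Matrix.of fun (i j : Fin n) => if (j : ℕ) = (i : ℕ) + l then (1 : ℂ) else 0 := by
  induction l with
  | zero =>
    ext i j
    simp [Matrix.one_apply, Fin.ext_iff, eq_comm]
  | succ l ih =>
    rw [pow_succ, ih]
    ext i j
    simp only [Matrix.mul_apply, Matrix.of_apply, Mblock]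
    by_cases h : (i : ℕ) + l < n
    · rw [Finset.sum_eq_single (⟨(i : ℕ) + l, h⟩ : Fin n)]
      · simp [add_assoc]
      · intro k _ hk
        rw [if_neg, zero_mul]
        intro hc
        exact hk (by ext; simp [hc])
      · simp
    · rw [Finset.sum_eq_zero, if_neg (by omega)]
      intro k _
      rw [if_neg (by omega), zero_mul]

lemma Mblock_pow_n (n : ℕ) : (Mblock n) ^ n = 0 := by
  rw [Mblock_pow]
  ext i j
  rw [Matrix.of_apply, if_neg (by omega)]
  rfl

lemma rank_Mblock_pow (n l : ℕ) (h : l ≤ n) : ((Mblock n) ^ l).rank = n - l := by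
  set P : Matrix (Fin (n - l)) (Fin n) ℂ :=
    Matrix.of fun k i => if (i : ℕ) = (k : ℕ) then 1 else 0 with hP
  set Q : Matrix (Fin n) (Fin (n - l)) ℂ :=
    Matrix.of fun j k => if (j : ℕ) = (k : ℕ) + l then 1 else 0 with hQ
  have hfac : (Mblock n) ^ l = Pᵀ * Qᵀ := by
    rw [Mblock_pow]
    ext i j
    simp only [Matrix.mul_apply, Matrix.of_apply, Matrix.transpose_apply, hP, hQ]
    by_cases hi : (i : ℕ) < n - l
    · rw [Finset.sum_eq_single (⟨(i : ℕ), hi⟩ : Fin (n - l))]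
      · simp
      · intro k _ hk
        rw [if_neg, zero_mul]
        intro hc
        exact hk (by ext; simp [hc])
      · simp
    · rw [Finset.sum_eq_zero, if_neg (by omega)]
      intro k _
      rw [if_neg (by omega), zero_mul]
  have hPPt : P * Pᵀ = 1 := by
    ext k k'
    simp only [Matrix.mul_apply, Matrix.of_apply, Matrix.transpose_apply, hP]
    rw [Finset.sum_eq_single (⟨(k : ℕ), by omega⟩ : Fin n)]
    · by_cases hk : k = k'
      · simp [hk, Matrix.one_apply]
      · rw [if_pos rfl, if_neg, one_mul, Matrix.one_apply_ne hk]
        simp only [Fin.ext_iff] at hk ⊢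
        omega
    · intro i _ hi
      rw [if_neg, zero_mul]
      intro hc
      exact hi (by ext; simp [hc])
    · simp
  have hQQt : Qᵀ * Q = 1 := by
    ext k k'
    simp only [Matrix.mul_apply, Matrix.of_apply, Matrix.transpose_apply, hQ]
    rw [Finset.sum_eq_single (⟨(k : ℕ) + l, by omega⟩ : Fin n)]
    · by_cases hk : k = k'
      · simp [hk, Matrix.one_apply]
      · rw [if_pos rfl, if_neg, one_mul, Matrix.one_apply_ne hk]
        simp only [Fin.ext_iff] at hk ⊢
        omega
    · intro i _ hi
      rw [if_neg, zero_mul]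
      intro hc
      exact hi (by ext; simp [hc])
    · simp
  apply le_antisymm
  · calc ((Mblock n) ^ l).rank = (Pᵀ * Qᵀ).rank := by rw [hfac]
      _ ≤ Qᵀ.rank := Matrix.rank_mul_le_right _ _
      _ ≤ Fintype.card (Fin (n - l)) := Matrix.rank_le_card_height _
      _ = n - l := Fintype.card_fin _
  · have h1 : P * ((Mblock n) ^ l * Q) = 1 := by
      rw [hfac, Matrix.mul_assoc Pᵀ Qᵀ Q, hQQt, Matrix.mul_one, hPPt]
    calc n - l = (1 : Matrix (Fin (n - l)) (Fin (n - l)) ℂ).rank := by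
            rw [Matrix.rank_one, Fintype.card_fin]
      _ = (P * ((Mblock n) ^ l * Q)).rank := by rw [h1]
      _ ≤ ((Mblock n) ^ l * Q).rank := Matrix.rank_mul_le_right _ _
      _ ≤ ((Mblock n) ^ l).rank := Matrix.rank_mul_le_left _ _

/-- For `λ ≠ 0` and `0 ≤ l ≤ n`, the rank of `(J_{n,λ}⁻¹ - (1/λ)·I)^l` is `n - l`;
in particular it is nonzero for `l ≤ n - 1`, and it vanishes for `l = n`. -/
theorem Jcell_inv_sub_pow_rank (n : ℕ) (hn : 1 ≤ n) (lam : ℂ) (hlam : lam ≠ 0) :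
    (∀ l : ℕ, l ≤ n →
        (((Jcell n lam)⁻¹ - lam⁻¹ • (1 : Matrix (Fin n) (Fin n) ℂ)) ^ l).rank = n - l) ∧
      (∀ l : ℕ, l ≤ n - 1 →
        ((Jcell n lam)⁻¹ - lam⁻¹ • (1 : Matrix (Fin n) (Fin n) ℂ)) ^ l ≠ 0) ∧
      ((Jcell n lam)⁻¹ - lam⁻¹ • (1 : Matrix (Fin n) (Fin n) ℂ)) ^ n = 0 := by
  set M := Mblock n with hM
  set x : Matrix (Fin n) (Fin n) ℂ := (-lam⁻¹) • M with hx
  set S : Matrix (Fin n) (Fin n) ℂ := ∑ i ∈ Finset.range n, x ^ i with hS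
  have hxn : x ^ n = 0 := by
    rw [hx, smul_pow, Mblock_pow_n, smul_zero]
  have hSx : S * (1 - x) = 1 := by
    have := geom_sum_mul x n
    rw [hxn] at this
    have h2 : S * (x - 1) = -1 := by rw [hS, this]; noncomm_ring
    calc S * (1 - x) = -(S * (x - 1)) := by noncomm_ring
      _ = 1 := by rw [h2, neg_neg]
  have hxS : (1 - x) * S = 1 := by
    have := mul_geom_sum x n
    rw [hxn] at this
    have h2 : (x - 1) * S = -1 := by rw [hS, this]; noncomm_ring
    calc (1 - x) * S = -((x - 1) * S) := by noncomm_ring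
      _ = 1 := by rw [h2, neg_neg]
  have hJ : Jcell n lam = lam • (1 - x) := by
    rw [Jcell, hx, smul_sub, smul_smul]
    field_simp
    simp [hM]
  have hJinv : (Jcell n lam)⁻¹ = lam⁻¹ • S := by
    apply Matrix.inv_eq_right_inv
    rw [hJ, Matrix.smul_mul, Matrix.mul_smul, smul_smul, hxS,
      mul_inv_cancel₀ hlam, one_smul]
  set c : ℂ := lam⁻¹ * -lam⁻¹ with hc
  have hA : (Jcell n lam)⁻¹ - lam⁻¹ • (1 : Matrix (Fin n) (Fin n) ℂ) = c • (S * M) := by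
    rw [hJinv, ← smul_sub]
    have hS1 : S - 1 = S * x := by
      calc S - 1 = S - S * (1 - x) := by rw [hSx]
        _ = S * x := by noncomm_ring
    rw [hS1, hx, Matrix.mul_smul, smul_smul, hc]
  have hcomm : Commute S M := by
    apply Commute.sum_left
    intro i _
    exact (((Commute.refl M).smul_right (-lam⁻¹)).symm).pow_left i
  have hSdet : IsUnit S.det := by
    apply IsUnit.of_mul_eq_one (1 - x).det
    rw [← Matrix.det_mul, hSx, Matrix.det_one]
  have hcne : c ≠ 0 := by
    rw [hc]
    simp [hlam]
  have hpow : ∀ l : ℕ,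
      ((Jcell n lam)⁻¹ - lam⁻¹ • (1 : Matrix (Fin n) (Fin n) ℂ)) ^ l
        = (c ^ l • S ^ l) * M ^ l := by
    intro l
    rw [hA, smul_pow, hcomm.mul_pow, smul_mul_assoc]
  have hrank : ∀ l : ℕ, l ≤ n →
      (((Jcell n lam)⁻¹ - lam⁻¹ • (1 : Matrix (Fin n) (Fin n) ℂ)) ^ l).rank = n - l := by
    intro l hl
    rw [hpow l, Matrix.rank_mul_eq_right_of_isUnit_det, hM, rank_Mblock_pow n l hl]
    rw [Matrix.det_smul, Matrix.det_pow]
    exact (IsUnit.pow _ (hcne.isUnit.pow l)).mul (hSdet.pow l)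
  refine ⟨hrank, ?_, ?_⟩
  · intro l hl hzero
    have h1 := hrank l (by omega)
    rw [hzero, Matrix.rank_zero] at h1
    omega
  · rw [hpow n, hM, Mblock_pow_n, mul_zero]
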